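/- Let M be a real d×k matrix with columns M_1,…,M_k satisfying Well-Separatedness with parameter α ∈ (0,1). Let ℓ_1,…,ℓ_r ∈ [k] be distinct indices and let ℓ, ℓ′ ∈ [k] be two distinct indices with ℓ, ℓ′ ∉ {ℓ_1,…,ℓ_r}. Then the orthogonal projection of M_ℓ − M_{ℓ′} onto the orthogonal complement of span{M_{ℓ_1},…,M_{ℓ_r}} has Euclidean norm at least α·max_{ℓ''}|M_{ℓ''}|. -/

import Mathlib

noncomputable def col {d k : ℕ} (M : Matrix (Fin d) (Fin k) ℝ) (ℓ : Fin k) :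
    EuclideanSpace ℝ (Fin d) := WithLp.toLp 2 (fun i => M i ℓ)

/-- Norm of the component of `x` orthogonal to the span of the columns `M ℓ'`, `ℓ' ≠ ℓ`. -/
noncomputable def projNullNorm {d k : ℕ} (M : Matrix (Fin d) (Fin k) ℝ) (ℓ : Fin k)
    (x : EuclideanSpace ℝ (Fin d)) : ℝ :=
  ‖(Submodule.orthogonalProjection ((Submodule.span ℝ {y | ∃ ℓ' : Fin k, ℓ' ≠ ℓ ∧ y = col M ℓ'})ᗮ) x :
      EuclideanSpace ℝ (Fin d))‖

theorem stmt12 {d k r : ℕ} (M : Matrix (Fin d) (Fin k) ℝ)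
    (α : ℝ) (hα : α ∈ Set.Ioo (0:ℝ) 1)
    (hWS : ∀ ℓ : Fin k, α * (⨆ ℓ' : Fin k, ‖col M ℓ'‖) ≤ projNullNorm M ℓ (col M ℓ))
    (ℓidx : Fin r → Fin k) (hinj : Function.Injective ℓidx)
    (ℓ ℓ' : Fin k) (hne : ℓ ≠ ℓ')
    (hℓ : ∀ t, ℓ ≠ ℓidx t) (hℓ' : ∀ t, ℓ' ≠ ℓidx t) :
    α * (⨆ ℓ'' : Fin k, ‖col M ℓ''‖) ≤
      ‖(Submodule.orthogonalProjection ((Submodule.span ℝ (Set.range fun t => col M (ℓidx t)))ᗮ)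
          (col M ℓ - col M ℓ') : EuclideanSpace ℝ (Fin d))‖ := by
  set W : Submodule ℝ (EuclideanSpace ℝ (Fin d)) :=
    Submodule.span ℝ {y | ∃ ℓ'' : Fin k, ℓ'' ≠ ℓ ∧ y = col M ℓ''} with hW
  set K : Submodule ℝ (EuclideanSpace ℝ (Fin d)) :=
    Submodule.span ℝ (Set.range fun t => col M (ℓidx t)) with hK
  have hKW : K ≤ W := by
    apply Submodule.span_mono
    rintro _ ⟨t, rfl⟩
    exact ⟨ℓidx t, (hℓ t).symm, rfl⟩
  have hWK : Wᗮ ≤ Kᗮ := Submodule.orthogonal_le hKW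
  -- M ℓ' ∈ W
  have hℓ'W : col M ℓ' ∈ W := Submodule.subset_span ⟨ℓ', hne.symm, rfl⟩
  -- P_{Wᗮ} (M ℓ - M ℓ') = P_{Wᗮ} (M ℓ)
  have hproj0 : Submodule.orthogonalProjection Wᗮ (col M ℓ') = 0 := by
    apply Submodule.orthogonalProjectionOnto_apply_of_mem_orthogonal
    exact (Submodule.le_orthogonal_orthogonal W) hℓ'W
  have key : projNullNorm M ℓ (col M ℓ) =
      ‖(Submodule.orthogonalProjection Wᗮ (col M ℓ - col M ℓ') : EuclideanSpace ℝ (Fin d))‖ := by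
    rw [projNullNorm, map_sub, hproj0, sub_zero]
  -- projecting onto the smaller subspace gives smaller norm
  have hle : ‖(Submodule.orthogonalProjection Wᗮ (col M ℓ - col M ℓ') : EuclideanSpace ℝ (Fin d))‖ ≤
      ‖(Submodule.orthogonalProjection Kᗮ (col M ℓ - col M ℓ') : EuclideanSpace ℝ (Fin d))‖ := by
    have := Submodule.orthogonalProjectionOnto_starProjection_of_le hWK (col M ℓ - col M ℓ')
    rw [Submodule.starProjection_apply] at this
    calc ‖(Submodule.orthogonalProjection Wᗮ (col M ℓ - col M ℓ') : EuclideanSpace ℝ (Fin d))‖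
        = ‖(Submodule.orthogonalProjection Wᗮ
            ((Submodule.orthogonalProjection Kᗮ (col M ℓ - col M ℓ') : EuclideanSpace ℝ (Fin d))) :
            EuclideanSpace ℝ (Fin d))‖ := by rw [this]
      _ ≤ ‖(Submodule.orthogonalProjection Kᗮ (col M ℓ - col M ℓ') : EuclideanSpace ℝ (Fin d))‖ := by
          set y : EuclideanSpace ℝ (Fin d) :=
            (Submodule.orthogonalProjection Kᗮ (col M ℓ - col M ℓ') : EuclideanSpace ℝ (Fin d))
          have h1 := (Submodule.orthogonalProjection Wᗮ).le_opNorm y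
          have h2 := Submodule.orthogonalProjection_norm_le Wᗮ
          have h3 : ‖(Submodule.orthogonalProjection Wᗮ y : EuclideanSpace ℝ (Fin d))‖
              = ‖Submodule.orthogonalProjection Wᗮ y‖ := rfl
          nlinarith [norm_nonneg y]
  calc α * (⨆ ℓ'' : Fin k, ‖col M ℓ''‖) ≤ projNullNorm M ℓ (col M ℓ) := hWS ℓ
    _ = _ := key
    _ ≤ _ := hle
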